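/- For every integer t ≥ 1, the graph G_t admits an automorphism that fixes both leaves v_1 and v_2 and interchanges the vertices u_1 and u_2. -/
import Mathlib


open SimpleGraph Finset

/-- A `Fintype` instance for the vertex set of a vertex-deleted subgraph. -/
noncomputable instance instFintypeNe {V : Type*} [Fintype V] (v : V) :
    Fintype {u : V // u ≠ v} :=
  (Set.toFinite {u : V | u ≠ v}).fintype

/-- The graph obtained from `G` by deleting the vertex `v` (an induced subgraph). -/
def deleteVertex {V : Type*} (G : SimpleGraph V) (v : V) :
    SimpleGraph {u : V // u ≠ v} :=
  G.induce {u : V | u ≠ v}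

/-- The Wiener index of a finite simple graph: the sum of distances over all
unordered pairs of vertices. -/
noncomputable def wiener {V : Type*} [Fintype V] (G : SimpleGraph V) : ℕ :=
  (∑ u : V, ∑ v : V, G.dist u v) / 2

/-- `v` is a Šoltés vertex of `G` if `G - v` is connected and has the same Wiener index. -/
def IsSoltes {V : Type*} [Fintype V] (G : SimpleGraph V) (v : V) : Prop :=
  (deleteVertex G v).Connected ∧ wiener (deleteVertex G v) = wiener G

/-- A graph is cubic (3-regular) if every vertex has exactly 3 neighbours. -/
def IsCubic {V : Type*} (G : SimpleGraph V) : Prop :=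
  ∀ v : V, (G.neighborSet v).ncard = 3

/-- A finite graph is 2-connected if it is connected, has at least 3 vertices,
and stays connected after deleting any one vertex. -/
def TwoConnected {V : Type*} [Fintype V] (G : SimpleGraph V) : Prop :=
  G.Connected ∧ 3 ≤ Fintype.card V ∧ ∀ v : V, (deleteVertex G v).Connected

/-! ### The graph `G_t`

`G_t` has `8t + 8` vertices: `2t` diamonds (copies of `K₄ − e`) arranged in a ring,
where each diamond `j` has vertices `A_j, B_j, C_j, D_j` (encoded as
`Sum.inl (j, 0), …, Sum.inl (j, 3)`), `A_j, B_j` being its two degree-2 vertices;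
consecutive diamonds are joined by the edges `B_j A_{j+1}`, and the remaining
connecting edge (between diamond `2t-1` and diamond `0`) is subdivided by the two
adjacent vertices `z₁, z₂` (encoded `Sum.inr 0, Sum.inr 1`); there is a 4-cycle
`c₁ c₁ₐ c₂ c₂ₐ` (encoded `Sum.inr 2, Sum.inr 4, Sum.inr 3, Sum.inr 5`) whose opposite
vertices `c₁, c₂` are joined to `z₁, z₂` respectively, and pendant leaves
`v₁, v₂` (encoded `Sum.inr 6, Sum.inr 7`) are attached to `c₁ₐ, c₂ₐ`. -/

/-- The vertex type of the graph `G_t`. -/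
abbrev GtV (t : ℕ) : Type := (Fin (2 * t) × Fin 4) ⊕ Fin 8

/-- The edges inside one diamond `K₄ − e`: `A–C, A–D, B–C, B–D, C–D` where
`A, B, C, D` are encoded as `0, 1, 2, 3`. -/
def diamondRel (a b : Fin 4) : Prop :=
  ((a : ℕ) = 0 ∧ (b : ℕ) = 2) ∨ ((a : ℕ) = 0 ∧ (b : ℕ) = 3) ∨
  ((a : ℕ) = 1 ∧ (b : ℕ) = 2) ∨ ((a : ℕ) = 1 ∧ (b : ℕ) = 3) ∨
  ((a : ℕ) = 2 ∧ (b : ℕ) = 3)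

/-- The base edge relation of `G_t` (symmetrized by `SimpleGraph.fromRel`). -/
def gtRel (t : ℕ) : GtV t → GtV t → Prop
  | Sum.inl (j, a), Sum.inl (k, b) =>
      -- edges inside a diamond, and the connecting edges `B_j A_{j+1}`
      (j = k ∧ diamondRel a b) ∨ ((k : ℕ) = (j : ℕ) + 1 ∧ (a : ℕ) = 1 ∧ (b : ℕ) = 0)
  | Sum.inl (j, a), Sum.inr m =>
      -- the edge `B_{2t-1} z₁` (half of the subdivided connecting edge)
      (j : ℕ) = 2 * t - 1 ∧ (a : ℕ) = 1 ∧ (m : ℕ) = 0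
  | Sum.inr m, Sum.inl (j, a) =>
      -- the edge `z₂ A_0` (the other half of the subdivided connecting edge)
      (m : ℕ) = 1 ∧ (j : ℕ) = 0 ∧ (a : ℕ) = 0
  | Sum.inr m, Sum.inr m' =>
      ((m : ℕ) = 0 ∧ (m' : ℕ) = 1) ∨    -- z₁ z₂
      ((m : ℕ) = 0 ∧ (m' : ℕ) = 2) ∨    -- z₁ c₁
      ((m : ℕ) = 1 ∧ (m' : ℕ) = 3) ∨    -- z₂ c₂
      ((m : ℕ) = 2 ∧ (m' : ℕ) = 4) ∨    -- c₁ c₁ₐ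
      ((m : ℕ) = 4 ∧ (m' : ℕ) = 3) ∨    -- c₁ₐ c₂
      ((m : ℕ) = 3 ∧ (m' : ℕ) = 5) ∨    -- c₂ c₂ₐ
      ((m : ℕ) = 5 ∧ (m' : ℕ) = 2) ∨    -- c₂ₐ c₁
      ((m : ℕ) = 4 ∧ (m' : ℕ) = 6) ∨    -- c₁ₐ v₁
      ((m : ℕ) = 5 ∧ (m' : ℕ) = 7)      -- c₂ₐ v₂

/-- The graph `G_t` on `8t + 8` vertices. -/
def GtGraph (t : ℕ) : SimpleGraph (GtV t) := SimpleGraph.fromRel (gtRel t)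

/-- The leaf `v₁` of `G_t`. -/
def gtv1 (t : ℕ) : GtV t := Sum.inr 6

/-- The leaf `v₂` of `G_t`. -/
def gtv2 (t : ℕ) : GtV t := Sum.inr 7

/-- The vertex `u₁ = B_{t-1}` of `G_t`: an endpoint of the edge joining the `t`-th and
`(t+1)`-st diamond, counting from the subdivided edge. -/
def gtu1 (t : ℕ) (ht : 1 ≤ t) : GtV t := Sum.inl (⟨t - 1, by omega⟩, 1)

/-- The vertex `u₂ = A_t` of `G_t`: the other endpoint of the edge joining the `t`-th
and `(t+1)`-st diamond, counting from the subdivided edge. -/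
def gtu2 (t : ℕ) (ht : 1 ≤ t) : GtV t := Sum.inl (⟨t, by omega⟩, 0)

/-- For every `t ≥ 1`, the graph `G_t` admits an automorphism fixing
both leaves `v₁, v₂` and interchanging `u₁` and `u₂`. -/
def sigma4 : Fin 4 → Fin 4 := ![1, 0, 2, 3]

def tau8 : Fin 8 → Fin 8 := ![1, 0, 3, 2, 4, 5, 6, 7]

def reflFun (t : ℕ) : GtV t → GtV t
  | Sum.inl (j, a) => Sum.inl (⟨2 * t - 1 - (j : ℕ), by have := j.isLt; omega⟩, sigma4 a)
  | Sum.inr m => Sum.inr (tau8 m)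

lemma sigma4_diamond : ∀ a b : Fin 4, diamondRel a b → diamondRel (sigma4 a) (sigma4 b) := by
  unfold diamondRel sigma4; decide

lemma sigma4_zero : ∀ a : Fin 4, (a : ℕ) = 0 → ((sigma4 a : ℕ) = 1) := by unfold sigma4; decide
lemma sigma4_one : ∀ a : Fin 4, (a : ℕ) = 1 → ((sigma4 a : ℕ) = 0) := by unfold sigma4; decide
lemma sigma4_invol : ∀ a : Fin 4, sigma4 (sigma4 a) = a := by unfold sigma4; decide
lemma tau8_invol : ∀ m : Fin 8, tau8 (tau8 m) = m := by unfold tau8; decide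
lemma tau8_zero : ∀ m : Fin 8, (m : ℕ) = 0 → (tau8 m : ℕ) = 1 := by unfold tau8; decide
lemma tau8_one : ∀ m : Fin 8, (m : ℕ) = 1 → (tau8 m : ℕ) = 0 := by unfold tau8; decide

lemma tau8_rel' : ∀ m m' : Fin 8,
    (((m : ℕ) = 0 ∧ (m' : ℕ) = 1) ∨ ((m : ℕ) = 0 ∧ (m' : ℕ) = 2) ∨ ((m : ℕ) = 1 ∧ (m' : ℕ) = 3) ∨ ((m : ℕ) = 2 ∧ (m' : ℕ) = 4) ∨ ((m : ℕ) = 4 ∧ (m' : ℕ) = 3) ∨ ((m : ℕ) = 3 ∧ (m' : ℕ) = 5) ∨ ((m : ℕ) = 5 ∧ (m' : ℕ) = 2) ∨ ((m : ℕ) = 4 ∧ (m' : ℕ) = 6) ∨ ((m : ℕ) = 5 ∧ (m' : ℕ) = 7)) →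
    ((((tau8 m) : ℕ) = 0 ∧ ((tau8 m') : ℕ) = 1) ∨ (((tau8 m) : ℕ) = 0 ∧ ((tau8 m') : ℕ) = 2) ∨ (((tau8 m) : ℕ) = 1 ∧ ((tau8 m') : ℕ) = 3) ∨ (((tau8 m) : ℕ) = 2 ∧ ((tau8 m') : ℕ) = 4) ∨ (((tau8 m) : ℕ) = 4 ∧ ((tau8 m') : ℕ) = 3) ∨ (((tau8 m) : ℕ) = 3 ∧ ((tau8 m') : ℕ) = 5) ∨ (((tau8 m) : ℕ) = 5 ∧ ((tau8 m') : ℕ) = 2) ∨ (((tau8 m) : ℕ) = 4 ∧ ((tau8 m') : ℕ) = 6) ∨ (((tau8 m) : ℕ) = 5 ∧ ((tau8 m') : ℕ) = 7)) ∨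
    ((((tau8 m') : ℕ) = 0 ∧ ((tau8 m) : ℕ) = 1) ∨ (((tau8 m') : ℕ) = 0 ∧ ((tau8 m) : ℕ) = 2) ∨ (((tau8 m') : ℕ) = 1 ∧ ((tau8 m) : ℕ) = 3) ∨ (((tau8 m') : ℕ) = 2 ∧ ((tau8 m) : ℕ) = 4) ∨ (((tau8 m') : ℕ) = 4 ∧ ((tau8 m) : ℕ) = 3) ∨ (((tau8 m') : ℕ) = 3 ∧ ((tau8 m) : ℕ) = 5) ∨ (((tau8 m') : ℕ) = 5 ∧ ((tau8 m) : ℕ) = 2) ∨ (((tau8 m') : ℕ) = 4 ∧ ((tau8 m) : ℕ) = 6) ∨ (((tau8 m') : ℕ) = 5 ∧ ((tau8 m) : ℕ) = 7)) := by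
  unfold tau8; decide

lemma tau8_rel (t : ℕ) : ∀ m m' : Fin 8, gtRel t (Sum.inr m) (Sum.inr m') →
    gtRel t (Sum.inr (tau8 m)) (Sum.inr (tau8 m')) ∨
    gtRel t (Sum.inr (tau8 m')) (Sum.inr (tau8 m)) :=
  fun m m' h => tau8_rel' m m' h

lemma reflFun_invol (t : ℕ) : ∀ x : GtV t, reflFun t (reflFun t x) = x
  | Sum.inl (j, a) => by
    have hj := j.isLt
    show Sum.inl (⟨2 * t - 1 - (2 * t - 1 - (j : ℕ)), by omega⟩, sigma4 (sigma4 a))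
      = Sum.inl (j, a)
    rw [sigma4_invol]
    have hfin : (⟨2 * t - 1 - (2 * t - 1 - (j : ℕ)), by omega⟩ : Fin (2 * t)) = j := by
      ext
      show 2 * t - 1 - (2 * t - 1 - (j : ℕ)) = (j : ℕ)
      omega
    rw [hfin]
  | Sum.inr m => by
    show Sum.inr (tau8 (tau8 m)) = Sum.inr m
    rw [tau8_invol]

lemma reflFun_rel (t : ℕ) : ∀ u v : GtV t, gtRel t u v →
    gtRel t (reflFun t u) (reflFun t v) ∨ gtRel t (reflFun t v) (reflFun t u)
  | Sum.inl (j, a), Sum.inl (k, b), h => by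
    have hj := j.isLt; have hk := k.isLt
    rcases h with ⟨hjk, hd⟩ | ⟨hk1, ha, hb⟩
    · exact Or.inl (Or.inl ⟨by subst hjk; rfl, sigma4_diamond a b hd⟩)
    · refine Or.inr (Or.inr ⟨?_, sigma4_zero b hb, sigma4_one a ha⟩)
      show 2 * t - 1 - (j : ℕ) = 2 * t - 1 - (k : ℕ) + 1
      omega
  | Sum.inl (j, a), Sum.inr m, h => by
    obtain ⟨hj, ha, hm⟩ := h
    have hj' := j.isLt
    refine Or.inr ⟨tau8_zero m hm, ?_, sigma4_one a ha⟩
    show 2 * t - 1 - (j : ℕ) = 0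
    omega
  | Sum.inr m, Sum.inl (j, a), h => by
    obtain ⟨hm, hj, ha⟩ := h
    have hj' := j.isLt
    refine Or.inr ⟨?_, sigma4_zero a ha, tau8_one m hm⟩
    show 2 * t - 1 - (j : ℕ) = 2 * t - 1
    omega
  | Sum.inr m, Sum.inr m', h => tau8_rel t m m' h

theorem gt_exists_automorphism_swapping_u1_u2 (t : ℕ) (ht : 1 ≤ t) :
    ∃ φ : GtGraph t ≃g GtGraph t,
      φ (gtv1 t) = gtv1 t ∧ φ (gtv2 t) = gtv2 t ∧
      φ (gtu1 t ht) = gtu2 t ht ∧ φ (gtu2 t ht) = gtu1 t ht := by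
  have hinj : Function.Injective (reflFun t) := by
    intro a b hab
    have := congrArg (reflFun t) hab
    rwa [reflFun_invol, reflFun_invol] at this
  have key : ∀ u v : GtV t,
      (GtGraph t).Adj u v → (GtGraph t).Adj (reflFun t u) (reflFun t v) := by
    intro u v h
    rw [GtGraph, SimpleGraph.fromRel_adj] at h ⊢
    refine ⟨fun hc => h.1 (hinj hc), ?_⟩
    rcases h.2 with h' | h'
    · exact reflFun_rel t u v h'
    · exact (reflFun_rel t v u h').symm
  refine ⟨⟨⟨reflFun t, reflFun t, reflFun_invol t, reflFun_invol t⟩, ?_⟩, ?_, ?_, ?_, ?_⟩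
  · intro a b
    constructor
    · intro h
      have h2 := key _ _ h
      simp only [Equiv.coe_fn_mk] at h2
      rwa [reflFun_invol, reflFun_invol] at h2
    · exact key a b
  · rfl
  · rfl
  · show reflFun t (gtu1 t ht) = gtu2 t ht
    show (Sum.inl (⟨2 * t - 1 - ((⟨t - 1, by omega⟩ : Fin (2 * t)) : ℕ), by omega⟩, sigma4 1)
      : GtV t) = (Sum.inl (⟨t, by omega⟩, 0) : GtV t)
    have hfin : (⟨2 * t - 1 - ((⟨t - 1, by omega⟩ : Fin (2 * t)) : ℕ), by omega⟩ : Fin (2 * t))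
        = ⟨t, by omega⟩ := by
      ext
      show 2 * t - 1 - (t - 1) = t
      omega
    rw [hfin]
    rfl
  · show reflFun t (gtu2 t ht) = gtu1 t ht
    show (Sum.inl (⟨2 * t - 1 - ((⟨t, by omega⟩ : Fin (2 * t)) : ℕ), by omega⟩, sigma4 0)
      : GtV t) = (Sum.inl (⟨t - 1, by omega⟩, 1) : GtV t)
    have hfin : (⟨2 * t - 1 - ((⟨t, by omega⟩ : Fin (2 * t)) : ℕ), by omega⟩ : Fin (2 * t))
        = ⟨t - 1, by omega⟩ := by
      ext
      show 2 * t - 1 - t = t - 1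
      omega
    rw [hfin]
    rfl
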